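/- Let r, c, m, p > 0 and 0 < a < 1. Suppose u, v : [0, ∞) → ℝ are differentiable functions satisfying u'(t) = r·u(t)·(1−u(t))·(u(t)−a) − (1+c·v(t))·u(t)·v(t) and v'(t) = m·v(t)·(p·u(t)·(1+c·v(t)) − 1) for all t ≥ 0, with u(0) > 0 and v(0) > 0. Then u(t) > 0 and v(t) > 0 for all t ≥ 0, u(t) ≤ max{u(0), 1} for all t ≥ 0, and v is bounded on [0, ∞), i.e., there exists M > 0 with v(t) ≤ M for all t ≥ 0. -/

import Mathlib

open Real Set MeasureTheory intervalIntegral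

/-- If `w` solves the linear ODE `w' = g t * w` on `[0,∞)` with continuous coefficient
and `w 0 > 0`, then `w` stays positive. -/
lemma pos_of_linear_ode (g w : ℝ → ℝ) (hg : ∀ t : ℝ, 0 ≤ t → ContinuousAt g t)
    (hw : ∀ t : ℝ, 0 ≤ t → HasDerivAt w (g t * w t) t) (h0 : 0 < w 0) :
    ∀ t : ℝ, 0 ≤ t → 0 < w t := by
  set g' : ℝ → ℝ := fun s => g (max s 0) with hg'def
  have hg'c : Continuous g' := by
    rw [continuous_iff_continuousAt]
    intro t
    have h1 : ContinuousAt (fun s : ℝ => max s 0) t :=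
      (continuous_id.max continuous_const).continuousAt
    exact ContinuousAt.comp (hg (max t 0) (le_max_right _ _)) h1
  set G : ℝ → ℝ := fun t => ∫ s in (0:ℝ)..t, g' s with hGdef
  have hG : ∀ t : ℝ, HasDerivAt G (g' t) t := fun t =>
    intervalIntegral.integral_hasDerivAt_right (hg'c.intervalIntegrable _ _)
      (hg'c.stronglyMeasurableAtFilter _ _) hg'c.continuousAt
  have key : ∀ t : ℝ, 0 ≤ t → w t * Real.exp (-(G t)) = w 0 := by
    intro t ht
    have hcont : ContinuousOn (fun s => w s * Real.exp (-(G s))) (Set.Icc 0 t) := by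
      intro x hx
      exact ((hw x hx.1).continuousAt.mul
        (((hG x).neg.exp).continuousAt)).continuousWithinAt
    have hder : ∀ x ∈ Set.Ico (0:ℝ) t,
        HasDerivWithinAt (fun s => w s * Real.exp (-(G s))) 0 (Set.Ici x) x := by
      intro x hx
      have hx0 : (0:ℝ) ≤ x := hx.1
      have h1 : HasDerivAt (fun s => Real.exp (-(G s)))
          (Real.exp (-(G x)) * -(g' x)) x := (hG x).neg.exp
      have h2 : HasDerivAt (fun s => w s * Real.exp (-(G s)))
          (g x * w x * Real.exp (-(G x)) + w x * (Real.exp (-(G x)) * -(g' x))) x :=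
        (hw x hx0).mul h1
      have hgx : g' x = g x := by
        simp only [hg'def, max_eq_left hx0]
      rw [hgx] at h2
      have : g x * w x * Real.exp (-(G x)) + w x * (Real.exp (-(G x)) * -(g x)) = 0 := by
        ring
      rw [this] at h2
      exact h2.hasDerivWithinAt
    have := constant_of_has_deriv_right_zero hcont hder t (Set.right_mem_Icc.mpr ht)
    have hG0 : G 0 = 0 := intervalIntegral.integral_same
    rw [hG0] at this
    simpa using this
  intro t ht
  have h1 := key t ht
  have h2 := Real.exp_pos (-(G t))
  nlinarith

set_option maxHeartbeats 1000000 in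
/-- Positivity and boundedness of solutions of the predator-prey system with
cooperative hunting and Allee effect. -/
theorem stmt_0 (r c m p a : ℝ) (hr : 0 < r) (hc : 0 < c) (hm : 0 < m) (hp : 0 < p)
    (ha0 : 0 < a) (ha1 : a < 1) (u v : ℝ → ℝ)
    (hu : ∀ t : ℝ, 0 ≤ t →
      HasDerivAt u (r * u t * (1 - u t) * (u t - a) - (1 + c * v t) * u t * v t) t)
    (hv : ∀ t : ℝ, 0 ≤ t →
      HasDerivAt v (m * v t * (p * u t * (1 + c * v t) - 1)) t)
    (hu0 : 0 < u 0) (hv0 : 0 < v 0) :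
    (∀ t : ℝ, 0 ≤ t → 0 < u t ∧ 0 < v t) ∧
    (∀ t : ℝ, 0 ≤ t → u t ≤ max (u 0) 1) ∧
    (∃ M : ℝ, 0 < M ∧ ∀ t : ℝ, 0 ≤ t → v t ≤ M) := by
  have hucont : ∀ t : ℝ, 0 ≤ t → ContinuousAt u t := fun t ht => (hu t ht).continuousAt
  have hvcont : ∀ t : ℝ, 0 ≤ t → ContinuousAt v t := fun t ht => (hv t ht).continuousAt
  -- positivity of u
  have upos : ∀ t : ℝ, 0 ≤ t → 0 < u t := by
    apply pos_of_linear_ode (fun t => r * (1 - u t) * (u t - a) - (1 + c * v t) * v t) u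
    · intro t ht
      exact (((continuousAt_const.mul (continuousAt_const.sub (hucont t ht))).mul
        ((hucont t ht).sub continuousAt_const)).sub
        ((continuousAt_const.add (continuousAt_const.mul (hvcont t ht))).mul (hvcont t ht)))
    · intro t ht
      have := hu t ht
      convert this using 1
      ring
    · exact hu0
  -- positivity of v
  have vpos : ∀ t : ℝ, 0 ≤ t → 0 < v t := by
    apply pos_of_linear_ode (fun t => m * (p * u t * (1 + c * v t) - 1)) v
    · intro t ht
      exact continuousAt_const.mul (((continuousAt_const.mul (hucont t ht)).mul
        (continuousAt_const.add (continuousAt_const.mul (hvcont t ht)))).sub continuousAt_const)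
    · intro t ht
      have := hv t ht
      convert this using 1
      ring
    · exact hv0
  set B : ℝ := max (u 0) 1 with hBdef
  have hB1 : (1:ℝ) ≤ B := le_max_right _ _
  have hB0 : (0:ℝ) < B := lt_of_lt_of_le one_pos hB1
  have hBu0 : u 0 ≤ B := le_max_left _ _
  -- boundedness of u
  have ubdd : ∀ t : ℝ, 0 ≤ t → u t ≤ B := by
    intro t₁ ht₁
    by_contra hcon
    push_neg at hcon
    set S : Set ℝ := {t | t ∈ Set.Icc 0 t₁ ∧ u t ≤ B} with hSdef
    have hS0 : (0:ℝ) ∈ S := ⟨⟨le_refl _, ht₁⟩, hBu0⟩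
    have hSne : S.Nonempty := ⟨0, hS0⟩
    have hSbdd : BddAbove S := ⟨t₁, fun s hs => hs.1.2⟩
    set t₀ : ℝ := sSup S with ht₀def
    have ht₀0 : 0 ≤ t₀ := le_csSup hSbdd hS0
    have ht₀t₁ : t₀ ≤ t₁ := csSup_le hSne (fun s hs => hs.1.2)
    have hut₀ : u t₀ ≤ B := by
      by_contra hlt
      push_neg at hlt
      have hev : ∀ᶠ s in nhds t₀, B < u s := (hucont t₀ ht₀0).eventually (eventually_gt_nhds hlt)
      rw [Metric.eventually_nhds_iff] at hev
      obtain ⟨ε, hε, hball⟩ := hev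
      have hub : ∀ s ∈ S, s ≤ t₀ - ε := by
        intro s hs
        have hsle : s ≤ t₀ := le_csSup hSbdd hs
        by_contra hsc
        push_neg at hsc
        have : dist s t₀ < ε := by
          rw [Real.dist_eq, abs_lt]
          constructor <;> linarith
        exact absurd hs.2 (not_le.mpr (hball this))
      have := csSup_le hSne hub
      linarith
    have ht₀lt : t₀ < t₁ := lt_of_le_of_ne ht₀t₁ (fun h => by rw [h] at hut₀; linarith)
    have hgt : ∀ s, s ∈ Set.Ioc t₀ t₁ → B < u s := by
      intro s hs
      by_contra hsle
      push_neg at hsle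
      have : s ∈ S := ⟨⟨le_trans ht₀0 hs.1.le, hs.2⟩, hsle⟩
      have := le_csSup hSbdd this
      linarith [hs.1]
    have hanti : StrictAntiOn u (Set.Icc t₀ t₁) := by
      apply strictAntiOn_of_deriv_neg (convex_Icc _ _)
      · intro x hx
        exact (hucont x (le_trans ht₀0 hx.1)).continuousWithinAt
      · intro x hx
        rw [interior_Icc] at hx
        have hx0 : 0 ≤ x := le_trans ht₀0 hx.1.le
        rw [(hu x hx0).deriv]
        have hux : B < u x := hgt x ⟨hx.1, hx.2.le⟩
        have hux0 : 0 < u x := upos x hx0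
        have hvx : 0 < v x := vpos x hx0
        have h1 : r * u x * (1 - u x) * (u x - a) < 0 := by
          have ha' : 0 < u x - a := by linarith
          have hb' : 1 - u x < 0 := by linarith
          have h := mul_neg_of_pos_of_neg (mul_pos hr hux0)
            (mul_neg_of_neg_of_pos hb' ha')
          nlinarith [h]
        have h2 : 0 < (1 + c * v x) * u x * v x := by
          have : (0:ℝ) < 1 + c * v x := by nlinarith
          positivity
        linarith
    have := hanti (Set.left_mem_Icc.mpr ht₀t₁) (Set.right_mem_Icc.mpr ht₀t₁) ht₀lt
    linarith
  -- boundedness of v via W = p u + v / m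
  set W : ℝ → ℝ := fun t => p * u t + v t / m with hWdef
  have hW : ∀ t : ℝ, 0 ≤ t →
      HasDerivAt W (p * r * u t * (1 - u t) * (u t - a) - v t) t := by
    intro t ht
    have h := ((hu t ht).const_mul p).add ((hv t ht).div_const m)
    refine h.congr_deriv ?_
    field_simp
    ring
  set C : ℝ := p * r * B * (1 + B) * (B + a) + m * p * B with hCdef
  have hC : 0 < C := by
    have h1 : (0:ℝ) < p * r * B * (1 + B) * (B + a) := by
      have : (0:ℝ) < 1 + B := by linarith
      have : (0:ℝ) < B + a := by linarith
      positivity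
    have h2 : (0:ℝ) < m * p * B := by positivity
    linarith
  have hWineq : ∀ t : ℝ, 0 ≤ t →
      (p * r * u t * (1 - u t) * (u t - a) - v t) + m * W t ≤ C := by
    intro t ht
    have hux : 0 < u t := upos t ht
    have huB : u t ≤ B := ubdd t ht
    have hprod : u t * (1 - u t) * (u t - a) ≤ B * (1 + B) * (B + a) := by
      have habs1 : |u t| ≤ B := by rw [abs_le]; constructor <;> linarith
      have habs2 : |1 - u t| ≤ 1 + B := by rw [abs_le]; constructor <;> linarith
      have habs3 : |u t - a| ≤ B + a := by rw [abs_le]; constructor <;> linarith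
      have hBB : (0:ℝ) ≤ B * (1 + B) := by nlinarith
      calc u t * (1 - u t) * (u t - a) ≤ |u t * (1 - u t) * (u t - a)| := le_abs_self _
        _ = |u t| * |1 - u t| * |u t - a| := by rw [abs_mul, abs_mul]
        _ ≤ B * (1 + B) * (B + a) :=
            mul_le_mul (mul_le_mul habs1 habs2 (abs_nonneg _) hB0.le) habs3
              (abs_nonneg _) hBB
    have hmW : m * W t = m * p * u t + v t := by
      simp only [hWdef]
      field_simp
    rw [hmW]
    have h1 : p * r * u t * (1 - u t) * (u t - a) ≤ p * r * B * (1 + B) * (B + a) := by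
      have := mul_le_mul_of_nonneg_left hprod (by positivity : (0:ℝ) ≤ p * r)
      nlinarith [this]

    have h2 : m * p * u t ≤ m * p * B :=
      mul_le_mul_of_nonneg_left huB (by positivity : (0:ℝ) ≤ m * p)
    linarith
  -- exponential comparison
  set K : ℝ := max (C / m) (W 0) with hKdef
  have hKC : C / m ≤ K := le_max_left _ _
  have hKW : W 0 ≤ K := le_max_right _ _
  have hK0 : 0 < K := lt_of_lt_of_le (by positivity) hKC
  have hE : ∀ t : ℝ, HasDerivAt (fun s => Real.exp (m * s)) (Real.exp (m * t) * m) t := by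
    intro t
    have h : HasDerivAt (fun s : ℝ => m * s) m t := by
      simpa using (hasDerivAt_id t).const_mul m
    exact h.exp
  set ψ : ℝ → ℝ := fun t => C / m * Real.exp (m * t) - W t * Real.exp (m * t) with hψdef
  have hψd : ∀ t : ℝ, 0 ≤ t → HasDerivAt ψ
      (C / m * (Real.exp (m * t) * m) -
        ((p * r * u t * (1 - u t) * (u t - a) - v t) * Real.exp (m * t) +
          W t * (Real.exp (m * t) * m))) t := by
    intro t ht
    exact ((hE t).const_mul (C / m)).sub ((hW t ht).mul (hE t))
  have hψnn : ∀ t : ℝ, 0 ≤ t →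
      0 ≤ C / m * (Real.exp (m * t) * m) -
        ((p * r * u t * (1 - u t) * (u t - a) - v t) * Real.exp (m * t) +
          W t * (Real.exp (m * t) * m)) := by
    intro t ht
    have he := Real.exp_pos (m * t)
    have h1 := hWineq t ht
    have h2 : C / m * (Real.exp (m * t) * m) = C * Real.exp (m * t) := by
      field_simp
    rw [h2]
    have : (p * r * u t * (1 - u t) * (u t - a) - v t) * Real.exp (m * t) +
        W t * (Real.exp (m * t) * m) =
        ((p * r * u t * (1 - u t) * (u t - a) - v t) + m * W t) * Real.exp (m * t) := by
      ring
    rw [this]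
    nlinarith
  have hψmono : MonotoneOn ψ (Set.Ici 0) := by
    apply monotoneOn_of_deriv_nonneg (convex_Ici 0)
    · intro x hx
      exact (hψd x hx).continuousAt.continuousWithinAt
    · intro x hx
      rw [interior_Ici] at hx
      exact (hψd x hx.le).differentiableAt.differentiableWithinAt
    · intro x hx
      rw [interior_Ici] at hx
      rw [(hψd x hx.le).deriv]
      exact hψnn x hx.le
  clear_value B W C K ψ
  refine ⟨fun t ht => ⟨upos t ht, vpos t ht⟩, ubdd, ⟨m * K, mul_pos hm hK0, ?_⟩⟩
  intro t ht
  have hmono := hψmono (Set.left_mem_Icc.mpr ht).1 (Set.mem_Ici.mpr ht) ht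
  have he : (0:ℝ) < Real.exp (m * t) := Real.exp_pos _
  have he1 : (1:ℝ) ≤ Real.exp (m * t) := by
    apply Real.one_le_exp
    positivity
  simp only [hψdef, mul_zero, Real.exp_zero, mul_one] at hmono
  -- hmono : C/m - W 0 ≤ C/m * exp(m t) - W t * exp(m t)
  have hWK : W t ≤ K := by
    have hstep : C / m * (Real.exp (m * t) - 1) ≤ K * (Real.exp (m * t) - 1) :=
      mul_le_mul_of_nonneg_right hKC (by linarith)
    have h1 : W t * Real.exp (m * t) ≤ K * Real.exp (m * t) := by
      have e1 : C / m * (Real.exp (m * t) - 1) =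
          C / m * Real.exp (m * t) - C / m := by ring
      have e2 : K * (Real.exp (m * t) - 1) = K * Real.exp (m * t) - K := by ring
      rw [e1, e2] at hstep
      linarith
    exact le_of_mul_le_mul_right h1 he
  have hmWt : m * W t = m * p * u t + v t := by
    simp only [hWdef]
    field_simp
  have hux : 0 < u t := upos t ht
  have h3 : m * W t ≤ m * K := mul_le_mul_of_nonneg_left hWK hm.le
  nlinarith [mul_pos (mul_pos hm hp) hux]
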